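/- For a subset X of ℕ \ {0}, the smallest Coe-monoid containing X equals the submonoid of ℕ generated by X ∪ {x+1 : x ∈ X odd} ∪ {x-1 : x ∈ X odd}. -/

import Mathlib

open Pointwise

/-- A numerical semigroup: a submonoid of (ℕ,+) with finite complement. -/
def IsNumSgrp (S : Set ℕ) : Prop :=
  0 ∈ S ∧ (∀ a b, a ∈ S → b ∈ S → a + b ∈ S) ∧ {x : ℕ | x ∉ S}.Finite

/-- A Coe-semigroup: a numerical semigroup containing x-1 and x+1 for each odd x ∈ S. -/
def IsCoe (S : Set ℕ) : Prop :=
  IsNumSgrp S ∧ ∀ x ∈ S, Odd x → x - 1 ∈ S ∧ x + 1 ∈ S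

/-- The Frobenius number: the largest natural number not in S (for S ≠ ℕ). -/
noncomputable def frob (S : Set ℕ) : ℕ := sSup {x : ℕ | x ∉ S}

/-- The multiplicity: the least nonzero element of S. -/
noncomputable def mult (S : Set ℕ) : ℕ := sInf {x : ℕ | x ∈ S ∧ x ≠ 0}

/-- The genus: the number of gaps of S. -/
noncomputable def genus (S : Set ℕ) : ℕ := {x : ℕ | x ∉ S}.ncard

/-- The minimal system of generators of a numerical semigroup:
nonzero elements that are not a sum of two nonzero elements. -/
def msg (S : Set ℕ) : Set ℕ :=
  (S \ {0}) \ {x | ∃ a ∈ S \ {0}, ∃ b ∈ S \ {0}, x = a + b}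

/-- A Coe-monoid: a submonoid of ℕ expressible as an intersection of Coe-semigroups. -/
def IsCoeMonoid (M : Set ℕ) : Prop :=
  ∃ 𝒜 : Set (Set ℕ), 𝒜.Nonempty ∧ (∀ T ∈ 𝒜, IsCoe T) ∧ M = ⋂₀ 𝒜

/-- The smallest Coe-monoid containing X. -/
def coeClosure (X : Set ℕ) : Set ℕ := ⋂₀ {M : Set ℕ | IsCoeMonoid M ∧ X ⊆ M}

theorem stmt_13 (X : Set ℕ) (hX : 0 ∉ X) :
    coeClosure X =
      ↑(AddSubmonoid.closure
        (X ∪ {y | ∃ x ∈ X, Odd x ∧ y = x + 1} ∪ {y | ∃ x ∈ X, Odd x ∧ y = x - 1})) := by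
  set G : Set ℕ :=
    X ∪ {y | ∃ x ∈ X, Odd x ∧ y = x + 1} ∪ {y | ∃ x ∈ X, Odd x ∧ y = x - 1} with hGdef
  set M : AddSubmonoid ℕ := AddSubmonoid.closure G with hMdef
  -- key: odd elements of M have their neighbors in M
  have key : ∀ x ∈ M, Odd x → x - 1 ∈ M ∧ x + 1 ∈ M := by
    intro x hx
    induction hx using AddSubmonoid.closure_induction with
    | mem g hg =>
      intro hodd
      rcases hg with (hg | ⟨z, hz, hzo, rfl⟩) | ⟨z, hz, hzo, rfl⟩
      · constructor
        · exact AddSubmonoid.subset_closure (Or.inr ⟨g, hg, hodd, rfl⟩)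
        · exact AddSubmonoid.subset_closure (Or.inl (Or.inr ⟨g, hg, hodd, rfl⟩))
      · obtain ⟨k, rfl⟩ := hzo
        obtain ⟨j, hj⟩ := hodd
        omega
      · obtain ⟨k, rfl⟩ := hzo
        obtain ⟨j, hj⟩ := hodd
        omega
    | zero => intro h; exact absurd h (by simp)
    | add a b ha hb iha ihb =>
      intro hodd
      rcases Nat.even_or_odd a with hae | hao
      · have hbo : Odd b := by
          rcases Nat.even_or_odd b with hbe | h
          · exact absurd hodd (by simpa [Nat.not_odd_iff_even] using hae.add hbe)
          · exact h
        obtain ⟨h1, h2⟩ := ihb hbo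
        have hb1 : 1 ≤ b := hbo.pos
        constructor
        · have : a + b - 1 = a + (b - 1) := by omega
          rw [this]; exact add_mem ha h1
        · have : a + b + 1 = a + (b + 1) := by ring
          rw [this]; exact add_mem ha h2
      · obtain ⟨h1, h2⟩ := iha hao
        have ha1 : 1 ≤ a := hao.pos
        constructor
        · have : a + b - 1 = (a - 1) + b := by omega
          rw [this]; exact add_mem h1 hb
        · have : a + b + 1 = (a + 1) + b := by ring
          rw [this]; exact add_mem h2 hb
  have hXG : X ⊆ G := fun x hx => Or.inl (Or.inl hx)
  -- M is a Coe-monoid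
  have hcoeM : IsCoeMonoid (M : Set ℕ) := by
    refine ⟨Set.range (fun n : ℕ => (M : Set ℕ) ∪ Set.Ici (2 * n)), ⟨_, ⟨0, rfl⟩⟩, ?_, ?_⟩
    · rintro T ⟨n, rfl⟩
      refine ⟨⟨Or.inl (zero_mem M), ?_, ?_⟩, ?_⟩
      · rintro a b (ha | ha) (hb | hb)
        · exact Or.inl (add_mem ha hb)
        · exact Or.inr (by simp at hb ⊢; omega)
        · exact Or.inr (by simp at ha ⊢; omega)
        · exact Or.inr (by simp at ha hb ⊢; omega)
      · exact (Set.finite_Iio (2 * n)).subset (by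
          intro x hx
          simp only [Set.mem_setOf_eq, Set.mem_union, not_or, Set.mem_Ici, not_le] at hx
          exact hx.2)
      · rintro x (hx | hx) hodd
        · exact ⟨Or.inl (key x hx hodd).1, Or.inl (key x hx hodd).2⟩
        · simp only [Set.mem_Ici] at hx
          have : 2 * n < x ∨ x = 2 * n := by omega
          have hx' : 2 * n < x := by
            rcases this with h | rfl
            · exact h
            · exact absurd hodd (by simp [Nat.even_mul])
          exact ⟨Or.inr (by simp; omega), Or.inr (by simp; omega)⟩
    · ext x
      simp only [Set.mem_sInter, Set.mem_range, forall_exists_index]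
      constructor
      · intro hx T n hn
        rw [← hn]
        exact Or.inl hx
      · intro h
        rcases h ((M : Set ℕ) ∪ Set.Ici (2 * (x + 1))) (x + 1) rfl with h | h
        · exact h
        · simp at h; omega
  apply Set.Subset.antisymm
  · exact Set.sInter_subset_of_mem ⟨hcoeM, hXG.trans AddSubmonoid.subset_closure⟩
  · intro m hm
    intro M' hM'
    obtain ⟨⟨𝒜, h𝒜ne, h𝒜coe, rfl⟩, hXM'⟩ := hM'
    -- M' is a submonoid containing G
    have hzero : (0 : ℕ) ∈ ⋂₀ 𝒜 := fun T hT => (h𝒜coe T hT).1.1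
    have hadd : ∀ a b : ℕ, a ∈ ⋂₀ 𝒜 → b ∈ ⋂₀ 𝒜 → a + b ∈ ⋂₀ 𝒜 := by
      intro a b ha hb T hT
      exact (h𝒜coe T hT).1.2.1 a b (ha T hT) (hb T hT)
    have hG : G ⊆ ⋂₀ 𝒜 := by
      rintro g ((hg | ⟨z, hz, hzo, rfl⟩) | ⟨z, hz, hzo, rfl⟩) T hT
      · exact hXM' hg T hT
      · exact ((h𝒜coe T hT).2 z (hXM' hz T hT) hzo).2
      · exact ((h𝒜coe T hT).2 z (hXM' hz T hT) hzo).1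
    let N : AddSubmonoid ℕ :=
      { carrier := ⋂₀ 𝒜
        zero_mem' := hzero
        add_mem' := fun {a b} ha hb => hadd a b ha hb }
    exact (AddSubmonoid.closure_le (S := N)).mpr hG hm
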